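/- The genus-2 surface group Σ = ⟨a1, a2, b1, b2 | [a1,a2][b1,b2]⟩ admits the alternative finite presentation ⟨x1, x2, c1, c2, δ | [x1,x2]δ, δ^{-2} x2 x1 [(x1 c1)^{-1}, (x2 c2)^{-1}] x2^{-1} x1^{-1}⟩, via the isomorphism given by x_i ↦ a_i^{-1}, c_i ↦ a_i b_i^{-1}, δ ↦ [a_2^{-1}, a_1^{-1}]. -/

import Mathlib

set_option linter.unusedTactic false
set_option linter.unreachableTactic false


open FreeGroup
open scoped commutatorElement

def surfRels : Set (FreeGroup (Fin 4)) :=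
  {⁅FreeGroup.of (0 : Fin 4), FreeGroup.of (1 : Fin 4)⁆ * ⁅FreeGroup.of (2 : Fin 4), FreeGroup.of (3 : Fin 4)⁆}

/-- The genus-2 surface group. -/
abbrev Surf := PresentedGroup surfRels

def a (i : Fin 2) : Surf := PresentedGroup.of ⟨i.val, by omega⟩
def b (i : Fin 2) : Surf := PresentedGroup.of ⟨i.val + 2, by omega⟩

abbrev M := Multiplicative (ℤ × ℤ)

def φgen : Fin 4 → M :=
  fun n => Multiplicative.ofAdd (if n.val = 0 ∨ n.val = 2 then ((1 : ℤ), (0 : ℤ)) else ((0 : ℤ), (1 : ℤ)))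

lemma φrels : ∀ r ∈ surfRels, FreeGroup.lift φgen r = 1 := by
  rintro r hr
  simp only [surfRels, Set.mem_singleton_iff] at hr
  subst hr
  have h1 : (FreeGroup.lift φgen) (⁅FreeGroup.of (0 : Fin 4), FreeGroup.of (1 : Fin 4)⁆ * ⁅FreeGroup.of (2 : Fin 4), FreeGroup.of (3 : Fin 4)⁆) = ⁅φgen 0, φgen 1⁆ * ⁅φgen 2, φgen 3⁆ := by
    simp [commutatorElement_def]
  rw [h1, commutatorElement_eq_one_iff_mul_comm.mpr (mul_comm _ _),
    commutatorElement_eq_one_iff_mul_comm.mpr (mul_comm _ _), one_mul]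

/-- The homomorphism Σ → ℤ² sending aᵢ, bᵢ to the i-th standard basis vector. -/
def φ1 : Surf →* M := PresentedGroup.toGroup φrels

/-- The direct product of r genus-2 surface groups. -/
abbrev GG (r : ℕ) := ∀ _ : Fin r, Surf

def A (r : ℕ) (i : Fin 2) (k : Fin r) : GG r := Pi.mulSingle k (a i)
def B (r : ℕ) (i : Fin 2) (k : Fin r) : GG r := Pi.mulSingle k (b i)

/-- The homomorphism G = Σ₁ × ⋯ × Σr → ℤ² sending all aᵢ, bᵢ to eᵢ. -/
def Φ (r : ℕ) : GG r →* M := ∏ k : Fin r, φ1.comp (Pi.evalMonoidHom (fun _ => Surf) k)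

def altRels : Set (FreeGroup (Fin 5)) :=
  { ⁅FreeGroup.of (0 : Fin 5), FreeGroup.of (1 : Fin 5)⁆ * FreeGroup.of (4 : Fin 5),
    (FreeGroup.of (4 : Fin 5)) ^ (-2 : ℤ) * FreeGroup.of (1 : Fin 5) *
      FreeGroup.of (0 : Fin 5) *
      ⁅(FreeGroup.of (0 : Fin 5) * FreeGroup.of (2 : Fin 5))⁻¹,
       (FreeGroup.of (1 : Fin 5) * FreeGroup.of (3 : Fin 5))⁻¹⁆ *
      (FreeGroup.of (1 : Fin 5))⁻¹ * (FreeGroup.of (0 : Fin 5))⁻¹ }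

section Aux

lemma pg_rel_eq_one {α : Type*} {rels : Set (FreeGroup α)} {r : FreeGroup α} (h : r ∈ rels) :
    (QuotientGroup.mk r : PresentedGroup rels) = 1 := by
  rw [QuotientGroup.eq_one_iff]
  exact Subgroup.subset_normalClosure h

def X : Fin 5 → PresentedGroup altRels := PresentedGroup.of

lemma surf_rel : ⁅a 0, a 1⁆ * ⁅b 0, b 1⁆ = (1 : Surf) :=
  pg_rel_eq_one (rels := surfRels)
    (r := ⁅FreeGroup.of (0 : Fin 4), FreeGroup.of (1 : Fin 4)⁆ *
      ⁅FreeGroup.of (2 : Fin 4), FreeGroup.of (3 : Fin 4)⁆) rfl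

lemma alt_rel1 : ⁅X 0, X 1⁆ * X 4 = 1 :=
  pg_rel_eq_one (rels := altRels)
    (r := ⁅FreeGroup.of (0 : Fin 5), FreeGroup.of (1 : Fin 5)⁆ * FreeGroup.of (4 : Fin 5))
    (Or.inl rfl)

lemma alt_rel2 :
    X 4 ^ (-2 : ℤ) * X 1 * X 0 * ⁅(X 0 * X 2)⁻¹, (X 1 * X 3)⁻¹⁆ * (X 1)⁻¹ * (X 0)⁻¹ = 1 :=
  pg_rel_eq_one (rels := altRels)
    (r := (FreeGroup.of (4 : Fin 5)) ^ (-2 : ℤ) * FreeGroup.of (1 : Fin 5) *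
      FreeGroup.of (0 : Fin 5) *
      ⁅(FreeGroup.of (0 : Fin 5) * FreeGroup.of (2 : Fin 5))⁻¹,
       (FreeGroup.of (1 : Fin 5) * FreeGroup.of (3 : Fin 5))⁻¹⁆ *
      (FreeGroup.of (1 : Fin 5))⁻¹ * (FreeGroup.of (0 : Fin 5))⁻¹)
    (Or.inr rfl)

lemma zpow_neg_two {G : Type*} [Group G] (g : G) : g ^ (-2 : ℤ) = g⁻¹ * g⁻¹ := by group

lemma aux1 {G : Type*} [Group G] (a0 a1 b0 b1 : G) (h : ⁅a0, a1⁆ * ⁅b0, b1⁆ = 1) :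
    ⁅a1⁻¹, a0⁻¹⁆ ^ (-2 : ℤ) * a1⁻¹ * a0⁻¹ *
      ⁅(a0⁻¹ * (a0 * b0⁻¹))⁻¹, (a1⁻¹ * (a1 * b1⁻¹))⁻¹⁆ * (a1⁻¹)⁻¹ * (a0⁻¹)⁻¹ = 1 := by
  have e0 : (a0⁻¹ * (a0 * b0⁻¹))⁻¹ = b0 := by group
  have e1 : (a1⁻¹ * (a1 * b1⁻¹))⁻¹ = b1 := by group
  have hb : ⁅b0, b1⁆ = ⁅a0, a1⁆⁻¹ := eq_inv_of_mul_eq_one_right h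
  rw [zpow_neg_two, e0, e1, hb]
  simp only [commutatorElement_def, mul_inv_rev, inv_inv]
  group

lemma aux2 {G : Type*} [Group G] (x0 x1 x2 x3 x4 : G) (h1 : ⁅x0, x1⁆ * x4 = 1)
    (h2 : x4 ^ (-2 : ℤ) * x1 * x0 * ⁅(x0 * x2)⁻¹, (x1 * x3)⁻¹⁆ * x1⁻¹ * x0⁻¹ = 1) :
    ⁅x0⁻¹, x1⁻¹⁆ * ⁅(x0 * x2)⁻¹, (x1 * x3)⁻¹⁆ = 1 := by
  have hx4 : x4 = ⁅x0, x1⁆⁻¹ := eq_inv_of_mul_eq_one_right h1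
  have hC : ⁅(x0 * x2)⁻¹, (x1 * x3)⁻¹⁆ = x0⁻¹ * x1⁻¹ * (x4 * x4) * x0 * x1 := by
    calc ⁅(x0 * x2)⁻¹, (x1 * x3)⁻¹⁆
        = x0⁻¹ * x1⁻¹ * (x4 * x4) *
          (x4 ^ (-2 : ℤ) * x1 * x0 * ⁅(x0 * x2)⁻¹, (x1 * x3)⁻¹⁆ * x1⁻¹ * x0⁻¹) * x0 * x1 := by
          rw [zpow_neg_two]; group
      _ = x0⁻¹ * x1⁻¹ * (x4 * x4) * x0 * x1 := by rw [h2]; group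
  rw [hC, hx4]
  simp only [commutatorElement_def, mul_inv_rev, inv_inv]
  group

def fgen : Fin 5 → Surf :=
  ![(a 0)⁻¹, (a 1)⁻¹, a 0 * (b 0)⁻¹, a 1 * (b 1)⁻¹, ⁅(a 1)⁻¹, (a 0)⁻¹⁆]

lemma fgen0 : fgen 0 = (a 0)⁻¹ := rfl
lemma fgen1 : fgen 1 = (a 1)⁻¹ := rfl
lemma fgen2 : fgen 2 = a 0 * (b 0)⁻¹ := rfl
lemma fgen3 : fgen 3 = a 1 * (b 1)⁻¹ := rfl
lemma fgen4 : fgen 4 = ⁅(a 1)⁻¹, (a 0)⁻¹⁆ := rfl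

lemma frels : ∀ r ∈ altRels, FreeGroup.lift fgen r = 1 := by
  rintro r (hr | hr) <;> subst hr
  · simp only [_root_.map_mul, commutatorElement_def, _root_.map_inv, FreeGroup.lift_apply_of,
      fgen0, fgen1, fgen4]
    group
  · simp only [_root_.map_mul, _root_.map_inv, map_zpow, FreeGroup.lift_apply_of,
      commutatorElement_def, fgen0, fgen1, fgen2, fgen3, fgen4]
    have := aux1 (a 0) (a 1) (b 0) (b 1) surf_rel
    simp only [commutatorElement_def, mul_inv_rev, inv_inv] at this ⊢
    rw [zpow_neg_two] at this ⊢
    simp only [commutatorElement_def, mul_inv_rev, inv_inv] at this ⊢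
    convert this using 1

def ggen : Fin 4 → PresentedGroup altRels :=
  ![(X 0)⁻¹, (X 1)⁻¹, (X 0 * X 2)⁻¹, (X 1 * X 3)⁻¹]

lemma ggen0 : ggen 0 = (X 0)⁻¹ := rfl
lemma ggen1 : ggen 1 = (X 1)⁻¹ := rfl
lemma ggen2 : ggen 2 = (X 0 * X 2)⁻¹ := rfl
lemma ggen3 : ggen 3 = (X 1 * X 3)⁻¹ := rfl

lemma grels : ∀ r ∈ surfRels, FreeGroup.lift ggen r = 1 := by
  rintro r hr
  simp only [surfRels, Set.mem_singleton_iff] at hr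
  subst hr
  simp only [_root_.map_mul, _root_.map_inv, FreeGroup.lift_apply_of, commutatorElement_def,
    ggen0, ggen1, ggen2, ggen3]
  have := aux2 (X 0) (X 1) (X 2) (X 3) (X 4) alt_rel1 alt_rel2
  simp only [commutatorElement_def, mul_inv_rev, inv_inv] at this ⊢
  convert this using 1

def fhom : PresentedGroup altRels →* Surf := PresentedGroup.toGroup frels
def ghom : Surf →* PresentedGroup altRels := PresentedGroup.toGroup grels

lemma X4_eq : X 4 = X 1 * X 0 * (X 1)⁻¹ * (X 0)⁻¹ := by
  have := eq_inv_of_mul_eq_one_right alt_rel1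
  rw [this, commutatorElement_def]
  group

lemma of4_eq : (PresentedGroup.of (4 : Fin 5) : PresentedGroup altRels) =
    PresentedGroup.of 1 * PresentedGroup.of 0 *
      (PresentedGroup.of 1)⁻¹ * (PresentedGroup.of 0)⁻¹ := X4_eq

end Aux

/-- The genus-2 surface group admits the alternative presentation
`⟨x₁,x₂,c₁,c₂,δ ∣ [x₁,x₂]δ, δ⁻² x₂x₁ [(x₁c₁)⁻¹,(x₂c₂)⁻¹] x₂⁻¹x₁⁻¹⟩`, via
`xᵢ ↦ aᵢ⁻¹`, `cᵢ ↦ aᵢbᵢ⁻¹`, `δ ↦ [a₂⁻¹,a₁⁻¹]`. -/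
theorem stmt13 :
    ∃ e : PresentedGroup altRels ≃* Surf,
      e (PresentedGroup.of 0) = (a 0)⁻¹ ∧
      e (PresentedGroup.of 1) = (a 1)⁻¹ ∧
      e (PresentedGroup.of 2) = a 0 * (b 0)⁻¹ ∧
      e (PresentedGroup.of 3) = a 1 * (b 1)⁻¹ ∧
      e (PresentedGroup.of 4) = ⁅(a 1)⁻¹, (a 0)⁻¹⁆ := by
  have hgf : ghom.comp fhom = MonoidHom.id _ := by
    apply PresentedGroup.ext
    intro x
    fin_cases x <;>
      simp [fhom, ghom, PresentedGroup.toGroup.of, fgen, ggen, X, a, b, _root_.map_mul,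
        _root_.map_inv, commutatorElement_def, of4_eq] <;> group
  have hfg : fhom.comp ghom = MonoidHom.id _ := by
    apply PresentedGroup.ext
    intro x
    fin_cases x <;>
      simp [fhom, ghom, PresentedGroup.toGroup.of, fgen, ggen, X, a, b, _root_.map_mul,
        _root_.map_inv] <;> group
  refine ⟨MonoidHom.toMulEquiv fhom ghom hgf hfg, ?_, ?_, ?_, ?_, ?_⟩ <;>
    simp [MonoidHom.toMulEquiv, fhom, PresentedGroup.toGroup.of, fgen]
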